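/- The Hankel determinants Δ and the shifted determinants Γ satisfy the bilinear identities Δ_{l−1,k} Δ_{l+2,k−1} = Δ_{l+1,k−1} Γ_{l−1,k} − Δ_{l,k} Γ_{l,k−1} and Δ_{l−1,k+1} Δ_{l+2,k−1} = Δ_{l+1,k} Γ_{l−1,k} − Δ_{l,k} Γ_{l,k}, whenever all entries are defined. -/

import Mathlib

open Matrix

variable {m : Type*} [DecidableEq m] [Fintype m] {R : Type*} [CommRing R]

lemma perm_fix_cases (σ : Equiv.Perm m) (j1 j2 : m)
    (h : ∀ j, j ≠ j1 → j ≠ j2 → σ j = j) : σ = 1 ∨ σ = Equiv.swap j1 j2 := by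
  have key : ∀ j, σ j ≠ j1 → σ j ≠ j2 → σ j = j := by
    intro j h1 h2
    exact σ.injective (h (σ j) h1 h2)
  have hA : σ j1 = j1 ∨ σ j1 = j2 := by
    by_cases h1 : σ j1 = j1
    · exact Or.inl h1
    by_cases h2 : σ j1 = j2
    · exact Or.inr h2
    · exact Or.inl (key j1 h1 h2)
  have hB : σ j2 = j1 ∨ σ j2 = j2 := by
    by_cases h1 : σ j2 = j1
    · exact Or.inl h1
    by_cases h2 : σ j2 = j2
    · exact Or.inr h2
    · exact Or.inr (key j2 h1 h2)
  rcases hA with hA | hA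
  · left
    have hB2 : σ j2 = j2 := by
      rcases hB with hB | hB
      · have : j2 = j1 := σ.injective (hB.trans hA.symm)
        rw [this]; exact hA
      · exact hB
    ext j
    by_cases hj1 : j = j1
    · rw [hj1]; exact hA
    by_cases hj2 : j = j2
    · rw [hj2]; exact hB2
    · exact h j hj1 hj2
  · by_cases hd : j1 = j2
    · left
      have hA1 : σ j1 = j1 := by rw [hA, hd]
      ext j
      by_cases hj1 : j = j1
      · rw [hj1]; exact hA1
      by_cases hj2 : j = j2
      · rw [hj2, ← hd]; exact hA1
      · exact h j hj1 hj2
    · right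
      have hB1 : σ j2 = j1 := by
        rcases hB with hB | hB
        · exact hB
        · exact absurd (σ.injective (hA.trans hB.symm)) hd
      ext j
      by_cases hj1 : j = j1
      · rw [hj1, Equiv.swap_apply_left]; exact hA
      by_cases hj2 : j = j2
      · rw [hj2, Equiv.swap_apply_right]; exact hB1
      · rw [Equiv.swap_apply_of_ne_of_ne hj1 hj2]; exact h j hj1 hj2

lemma det_update_one_two (j1 j2 : m) (hj : j1 ≠ j2) (c1 c2 : m → R) :
    (((1 : Matrix m m R).updateCol j1 c1).updateCol j2 c2).det
      = c1 j1 * c2 j2 - c1 j2 * c2 j1 := by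
  set U := ((1 : Matrix m m R).updateCol j1 c1).updateCol j2 c2 with hU
  have hUj1 : ∀ r, U r j1 = c1 r := by
    intro r
    rw [hU, updateCol_apply, if_neg hj, updateCol_apply, if_pos rfl]
  have hUj2 : ∀ r, U r j2 = c2 r := by
    intro r; simp [hU, updateCol_apply]
  have hUo : ∀ r j, j ≠ j1 → j ≠ j2 → U r j = (1 : Matrix m m R) r j := by
    intro r j h1 h2; simp [hU, updateCol_apply, h1, h2]
  rw [det_apply]
  rw [← Finset.sum_subset (Finset.subset_univ ({1, Equiv.swap j1 j2} : Finset (Equiv.Perm m)))]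
  · have hne : (1 : Equiv.Perm m) ≠ Equiv.swap j1 j2 := by
      intro hcon
      have : j1 = j2 := by
        have := congrArg (fun σ : Equiv.Perm m => σ j1) hcon
        simpa [Equiv.swap_apply_left] using this
      exact hj this
    rw [Finset.sum_pair hne]
    have h1 : (∏ i, U ((1 : Equiv.Perm m) i) i) = c1 j1 * c2 j2 := by
      rw [← Finset.mul_prod_erase Finset.univ _ (Finset.mem_univ j1)]
      rw [← Finset.mul_prod_erase _ _ (Finset.mem_erase.2 ⟨hj.symm, Finset.mem_univ j2⟩)]
      rw [Finset.prod_eq_one]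
      · simp only [Equiv.Perm.one_apply, hUj1, hUj2, mul_one]
      · intro j hjmem
        simp only [Finset.mem_erase] at hjmem
        rw [Equiv.Perm.one_apply, hUo j j hjmem.2.1 hjmem.1, one_apply_eq]
    have h2 : (∏ i, U (Equiv.swap j1 j2 i) i) = c1 j2 * c2 j1 := by
      rw [← Finset.mul_prod_erase Finset.univ _ (Finset.mem_univ j1)]
      rw [← Finset.mul_prod_erase _ _ (Finset.mem_erase.2 ⟨hj.symm, Finset.mem_univ j2⟩)]
      rw [Finset.prod_eq_one]
      · rw [Equiv.swap_apply_left, Equiv.swap_apply_right, hUj1, hUj2]; ring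
      · intro j hjmem
        simp only [Finset.mem_erase] at hjmem
        rw [Equiv.swap_apply_of_ne_of_ne hjmem.2.1 hjmem.1,
          hUo j j hjmem.2.1 hjmem.1, one_apply_eq]
    rw [h1, h2]
    simp [Equiv.Perm.sign_swap hj]
    ring
  · intro σ _ hσ
    have : ¬ (σ = 1 ∨ σ = Equiv.swap j1 j2) := by
      intro hcon
      rcases hcon with h' | h' <;> simp [h'] at hσ
    have hex : ∃ j, j ≠ j1 ∧ j ≠ j2 ∧ σ j ≠ j := by
      by_contra hcon
      push_neg at hcon
      exact this (perm_fix_cases σ j1 j2 fun j a b => hcon j a b)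
    obtain ⟨j, ha, hb, hc⟩ := hex
    have hz : U (σ j) j = 0 := by
      rw [hUo (σ j) j ha hb, one_apply_ne hc]
    rw [Finset.prod_eq_zero (Finset.mem_univ j) (f := fun i => U (σ i) i) hz, smul_zero]

lemma my_updateColumn_comm (A : Matrix m m R) {j1 j2 : m} (hj : j1 ≠ j2) (c1 c2 : m → R) :
    (A.updateCol j1 c1).updateCol j2 c2 = (A.updateCol j2 c2).updateCol j1 c1 := by
  ext r c
  by_cases h1 : c = j1 <;> by_cases h2 : c = j2 <;>
    simp [updateCol_apply, h1, h2] <;> simp_all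

lemma mul_update_one_two (A : Matrix m m R) (j1 j2 : m) (hj : j1 ≠ j2) (c1 c2 : m → R) :
    A * (((1 : Matrix m m R).updateCol j1 c1).updateCol j2 c2)
      = (A.updateCol j1 (A.mulVec c1)).updateCol j2 (A.mulVec c2) := by
  ext r c
  by_cases h2 : c = j2
  · subst h2
    simp [Matrix.mul_apply, updateCol_apply, Matrix.mulVec, dotProduct]
  by_cases h1 : c = j1
  · subst h1
    simp [Matrix.mul_apply, updateCol_apply, h2, Matrix.mulVec, dotProduct]
  · simp [Matrix.mul_apply, updateCol_apply, h1, h2, Matrix.one_apply, mul_ite,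
      Finset.sum_ite_eq', Finset.mem_univ]

/-- The fundamental bilinear relation, valid over any commutative ring. -/
lemma key0 (A : Matrix m m R) (i1 i2 j1 j2 : m) (hj : j1 ≠ j2) :
    A.det * ((A.updateCol j1 (Pi.single i1 1)).det * (A.updateCol j2 (Pi.single i2 1)).det
      - (A.updateCol j2 (Pi.single i1 1)).det * (A.updateCol j1 (Pi.single i2 1)).det)
    = A.det ^ 2 * ((A.updateCol j1 (Pi.single i1 1)).updateCol j2 (Pi.single i2 1)).det := by
  have hdetU := det_update_one_two j1 j2 hj (cramer A (Pi.single i1 1)) (cramer A (Pi.single i2 1))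
  have e1 : ((A.updateCol j1 ((A.det • (Pi.single i1 1 : m → R)))).updateCol j2
      ((A.det • (Pi.single i2 1 : m → R)))).det
      = A.det * (((1 : Matrix m m R).updateCol j1 (cramer A (Pi.single i1 1))).updateCol j2
          (cramer A (Pi.single i2 1))).det := by
    rw [← det_mul, mul_update_one_two A j1 j2 hj, mulVec_cramer, mulVec_cramer]
  have e2 : ((A.updateCol j1 ((A.det • (Pi.single i1 1 : m → R)))).updateCol j2
      ((A.det • (Pi.single i2 1 : m → R)))).det
      = A.det ^ 2 * ((A.updateCol j1 (Pi.single i1 1)).updateCol j2 (Pi.single i2 1)).det := by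
    rw [det_updateCol_smul,
      my_updateColumn_comm _ hj, det_updateCol_smul, my_updateColumn_comm _ hj.symm]
    ring
  rw [← e2, e1, hdetU]
  simp only [cramer_apply]
  try ring

lemma key_field {K : Type*} [Field K] (A : Matrix m m K) (i1 i2 j1 j2 : m) (hj : j1 ≠ j2)
    (hd : A.det ≠ 0) :
    A.det * ((A.updateCol j1 (Pi.single i1 1)).updateCol j2 (Pi.single i2 1)).det
      = (A.updateCol j1 (Pi.single i1 1)).det * (A.updateCol j2 (Pi.single i2 1)).det
        - (A.updateCol j2 (Pi.single i1 1)).det * (A.updateCol j1 (Pi.single i2 1)).det := by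
  have h := key0 A i1 i2 j1 j2 hj
  rw [pow_two, mul_assoc] at h
  exact (mul_left_cancel₀ hd h).symm

lemma map_update_single {S : Type*} [CommRing S] (f : R →+* S) (M : Matrix m m R) (j i : m) :
    (M.updateCol j (Pi.single i 1)).map f = (M.map f).updateCol j (Pi.single i 1) := by
  ext r c
  by_cases hc : c = j
  · subst hc
    by_cases hr : r = i <;> simp [updateCol_apply, Matrix.map_apply, hr, Pi.single_apply]
  · simp [updateCol_apply, Matrix.map_apply, hc]

def Jexpr (A : Matrix m m R) (i1 i2 j1 j2 : m) : R :=
  A.det * ((A.updateCol j1 (Pi.single i1 1)).updateCol j2 (Pi.single i2 1)).det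
    - ((A.updateCol j1 (Pi.single i1 1)).det * (A.updateCol j2 (Pi.single i2 1)).det
      - (A.updateCol j2 (Pi.single i1 1)).det * (A.updateCol j1 (Pi.single i2 1)).det)

lemma map_Jexpr {S : Type*} [CommRing S] (f : R →+* S) (A : Matrix m m R) (i1 i2 j1 j2 : m) :
    f (Jexpr A i1 i2 j1 j2) = Jexpr (A.map f) i1 i2 j1 j2 := by
  unfold Jexpr
  simp only [map_sub, _root_.map_mul, RingHom.map_det, RingHom.mapMatrix_apply, map_update_single]

lemma key_real (A : Matrix m m ℝ) (i1 i2 j1 j2 : m) (hj : j1 ≠ j2) :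
    A.det * ((A.updateCol j1 (Pi.single i1 1)).updateCol j2 (Pi.single i2 1)).det
      = (A.updateCol j1 (Pi.single i1 1)).det * (A.updateCol j2 (Pi.single i2 1)).det
        - (A.updateCol j2 (Pi.single i1 1)).det * (A.updateCol j1 (Pi.single i2 1)).det := by
  have main : Jexpr A i1 i2 j1 j2 = 0 := by
    have hB : (charmatrix (-A)).det ≠ 0 := by
      have h1 : (-A).charpoly ≠ 0 := (Matrix.charpoly_monic (-A)).ne_zero
      simpa [Matrix.charpoly] using h1
    set K := FractionRing (Polynomial ℝ) with hK
    have hinj : Function.Injective (algebraMap (Polynomial ℝ) K) := IsFractionRing.injective _ _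
    have hd : ((charmatrix (-A)).map (algebraMap (Polynomial ℝ) K)).det ≠ 0 := by
      rw [← RingHom.mapMatrix_apply, ← RingHom.map_det]
      intro h
      exact hB (hinj (by rw [h, map_zero]))
    have hKey : Jexpr ((charmatrix (-A)).map (algebraMap (Polynomial ℝ) K)) i1 i2 j1 j2 = 0 := by
      have h := key_field ((charmatrix (-A)).map (algebraMap (Polynomial ℝ) K)) i1 i2 j1 j2 hj hd
      unfold Jexpr
      rw [h]
      ring
    have hP : Jexpr (charmatrix (-A)) i1 i2 j1 j2 = 0 := by
      apply hinj
      rw [map_Jexpr, hKey, map_zero]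
    have h2 := map_Jexpr (Polynomial.evalRingHom (0 : ℝ)) (charmatrix (-A)) i1 i2 j1 j2
    rw [hP, map_zero] at h2
    have hmap : (charmatrix (-A)).map (Polynomial.evalRingHom (0 : ℝ)) = A := by
      ext r c
      by_cases h : r = c <;>
        simp [charmatrix_apply, Matrix.map_apply, Matrix.diagonal_apply, h]
    rw [hmap] at h2
    exact h2.symm
  unfold Jexpr at main
  have := sub_eq_zero.mp main
  linarith [this]

variable {n : ℕ}

lemma det_updateColumn_single (M : Matrix (Fin (n + 1)) (Fin (n + 1)) R) (i j : Fin (n + 1)) :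
    (M.updateCol j (Pi.single i 1)).det
      = (-1 : R) ^ ((i : ℕ) + (j : ℕ)) * (M.submatrix i.succAbove j.succAbove).det := by
  rw [det_succ_column _ j, Finset.sum_eq_single i]
  · have hsub : (M.updateCol j (Pi.single i 1)).submatrix i.succAbove j.succAbove
        = M.submatrix i.succAbove j.succAbove := by
      ext r c
      simp [Matrix.submatrix_apply, updateCol_apply, Fin.succAbove_ne j c]
    rw [hsub]
    simp [updateCol_apply]
  · intro b _ hb
    simp [updateCol_apply, Pi.single_apply, hb]
  · simp

lemma det_updateColumn_single_two (M : Matrix (Fin (n + 2)) (Fin (n + 2)) R)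
    (i2 j2 : Fin (n + 2)) (i1 j1 : Fin (n + 1)) :
    ((M.updateCol (j2.succAbove j1) (Pi.single (i2.succAbove i1) 1)).updateCol j2
        (Pi.single i2 1)).det
      = (-1 : R) ^ ((i1 : ℕ) + (j1 : ℕ) + (i2 : ℕ) + (j2 : ℕ))
        * (M.submatrix (i2.succAbove ∘ i1.succAbove) (j2.succAbove ∘ j1.succAbove)).det := by
  rw [det_updateColumn_single]
  have hcomm : (M.updateCol (j2.succAbove j1) (Pi.single (i2.succAbove i1) 1)).submatrix
      i2.succAbove j2.succAbove
      = (M.submatrix i2.succAbove j2.succAbove).updateCol j1 (Pi.single i1 1) := by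
    ext r c
    simp only [Matrix.submatrix_apply, updateCol_apply, Fin.succAbove_right_inj]
    by_cases hc : c = j1
    · simp [hc, Pi.single_apply, Fin.succAbove_right_inj]
    · simp [hc]
  rw [hcomm, det_updateColumn_single, Matrix.submatrix_submatrix]
  ring

lemma updateColumn_overwrite (M : Matrix m m R) (j : m) (c1 c2 : m → R) :
    (M.updateCol j c1).updateCol j c2 = M.updateCol j c2 := by
  ext r c
  by_cases h : c = j <;> simp [updateCol_apply, h]

lemma val_succAbove_one (r : Fin (n + 1)) :
    (((1 : Fin (n + 2)).succAbove r) : ℕ) = if (r : ℕ) = 0 then 0 else (r : ℕ) + 1 := by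
  simp only [Fin.succAbove, Fin.lt_def, Fin.coe_castSucc, Fin.val_one]
  split_ifs with h1 h2 h2 <;> simp [Fin.coe_castSucc, Fin.val_succ, -Fin.val_eq_zero_iff] <;> omega

/-- The Hankel determinant `Δ_{l,k} = det (s_{l+i+j})_{0 ≤ i,j ≤ k-1}`, with `Δ_{l,0} = 1`. -/
noncomputable def hankelDet (s : ℤ → ℝ) (l : ℤ) (k : ℕ) : ℝ :=
  (Matrix.of fun i j : Fin k => s (l + (i.1 : ℤ) + (j.1 : ℤ))).det

/-- The determinant `Γ_{l,k}`: the `k×k` determinant whose first row is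
`(s_l, …, s_{l+k-1})` and whose `i`-th row (`i ≥ 2`, i.e. 0-based row `r ≥ 1`) is
`(s_{l+i}, …, s_{l+i+k-1})` (the offset `l+1` is skipped); `Γ_{l,0} = 0`. -/
noncomputable def gammaDet (s : ℤ → ℝ) (l : ℤ) (k : ℕ) : ℝ :=
  if k = 0 then 0 else
    (Matrix.of fun i j : Fin k =>
      s (l + (if i.1 = 0 then 0 else (i.1 : ℤ) + 1) + (j.1 : ℤ))).det

lemma det_eq_hankel {q : ℕ} (s : ℤ → ℝ) (a : ℤ) (M : Matrix (Fin q) (Fin q) ℝ)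
    (h : ∀ i j : Fin q, M i j = s (a + (i.1 : ℤ) + (j.1 : ℤ))) : M.det = hankelDet s a q := by
  unfold hankelDet
  congr 1
  ext i j
  rw [Matrix.of_apply, ← h i j]

lemma det_eq_gamma {q : ℕ} (s : ℤ → ℝ) (a : ℤ) (hq : q ≠ 0) (M : Matrix (Fin q) (Fin q) ℝ)
    (h : ∀ i j : Fin q,
      M i j = s (a + (if i.1 = 0 then 0 else (i.1 : ℤ) + 1) + (j.1 : ℤ))) :
    M.det = gammaDet s a q := by
  unfold gammaDet
  rw [if_neg hq]
  congr 1
  ext i j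
  rw [Matrix.of_apply, ← h i j]

lemma id2_main (s : ℤ → ℝ) (l : ℤ) (m : ℕ) :
    hankelDet s (l - 1) (m + 3) * hankelDet s (l + 2) (m + 1) =
      hankelDet s (l + 1) (m + 2) * gammaDet s (l - 1) (m + 2) -
        hankelDet s l (m + 2) * gammaDet s l (m + 2) := by
  set A : Matrix (Fin (m + 3)) (Fin (m + 3)) ℝ :=
    Matrix.of (fun i j : Fin (m + 3) => s (l - 1 + (i.1 : ℤ) + (j.1 : ℤ))) with hA
  have hone0 : ((1 : Fin (m + 3)).succAbove (0 : Fin (m + 2))) = (0 : Fin (m + 3)) := by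
    ext
    rw [val_succAbove_one]
    simp
  have hlast1 : ((Fin.last (m + 2)).succAbove (0 : Fin (m + 2))) = (0 : Fin (m + 3)) := by
    simp [Fin.succAbove_last]
  have hj2 : (0 : Fin (m + 3)) ≠ Fin.last (m + 2) := by
    intro h
    have h' := congrArg Fin.val h
    simp [Fin.val_last] at h'
  have key2 := key_real A 0 1 0 (Fin.last (m + 2)) hj2
  have ca : A.det = hankelDet s (l - 1) (m + 3) :=
    det_eq_hankel s (l - 1) A (fun i j => rfl)
  have cb : ((A.updateCol 0 (Pi.single 0 1)).updateCol (Fin.last (m + 2))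
      (Pi.single 1 1)).det = -((-1 : ℝ) ^ m) * hankelDet s (l + 2) (m + 1) := by
    have e := det_updateColumn_single_two A 1 (Fin.last (m + 2)) 0 0
    rw [hone0, hlast1] at e
    rw [e]
    have hent : ∀ i j : Fin (m + 1),
        (A.submatrix ((1 : Fin (m + 3)).succAbove ∘ (0 : Fin (m + 2)).succAbove)
          ((Fin.last (m + 2)).succAbove ∘ (0 : Fin (m + 2)).succAbove)) i j
          = s ((l + 2) + (i.1 : ℤ) + (j.1 : ℤ)) := by
      intro i j
      simp only [Matrix.submatrix_apply, Function.comp_apply, hA, Matrix.of_apply,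
        Fin.zero_succAbove, Fin.succAbove_last]
      congr 1
      simp only [val_succAbove_one, Fin.val_succ, Fin.coe_castSucc]
      simp only [Nat.succ_ne_zero, if_false]
      push_cast
      ring
    rw [det_eq_hankel s (l + 2) _ hent]
    simp only [Fin.val_zero, Fin.val_one, Fin.val_last]
    ring
  have cc : (A.updateCol 0 (Pi.single 0 1)).det = hankelDet s (l + 1) (m + 2) := by
    rw [det_updateColumn_single]
    have hent : ∀ i j : Fin (m + 2),
        (A.submatrix (0 : Fin (m + 3)).succAbove (0 : Fin (m + 3)).succAbove) i j
          = s ((l + 1) + (i.1 : ℤ) + (j.1 : ℤ)) := by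
      intro i j
      simp only [Matrix.submatrix_apply, hA, Matrix.of_apply, Fin.zero_succAbove]
      congr 1
      simp only [Fin.val_succ]
      push_cast
      ring
    rw [det_eq_hankel s (l + 1) _ hent]
    simp only [Fin.val_zero]
    ring
  have cd : (A.updateCol (Fin.last (m + 2)) (Pi.single 1 1)).det
      = -((-1 : ℝ) ^ m) * gammaDet s (l - 1) (m + 2) := by
    rw [det_updateColumn_single]
    have hent : ∀ i j : Fin (m + 2),
        (A.submatrix (1 : Fin (m + 3)).succAbove (Fin.last (m + 2)).succAbove) i j
          = s ((l - 1) + (if i.1 = 0 then 0 else (i.1 : ℤ) + 1) + (j.1 : ℤ)) := by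
      intro i j
      simp only [Matrix.submatrix_apply, hA, Matrix.of_apply, Fin.succAbove_last]
      congr 1
      simp only [val_succAbove_one, Fin.coe_castSucc]
      split_ifs <;> push_cast <;> ring
    rw [det_eq_gamma s (l - 1) (by omega) _ hent]
    simp only [Fin.val_one, Fin.val_last]
    ring
  have ce : (A.updateCol (Fin.last (m + 2)) (Pi.single 0 1)).det
      = (-1 : ℝ) ^ m * hankelDet s l (m + 2) := by
    rw [det_updateColumn_single]
    have hent : ∀ i j : Fin (m + 2),
        (A.submatrix (0 : Fin (m + 3)).succAbove (Fin.last (m + 2)).succAbove) i j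
          = s (l + (i.1 : ℤ) + (j.1 : ℤ)) := by
      intro i j
      simp only [Matrix.submatrix_apply, hA, Matrix.of_apply, Fin.zero_succAbove,
        Fin.succAbove_last]
      congr 1
      simp only [Fin.val_succ, Fin.coe_castSucc]
      push_cast
      ring
    rw [det_eq_hankel s l _ hent]
    simp only [Fin.val_zero, Fin.val_last]
    ring
  have cf : (A.updateCol 0 (Pi.single 1 1)).det = -gammaDet s l (m + 2) := by
    rw [det_updateColumn_single]
    have hent : ∀ i j : Fin (m + 2),
        (A.submatrix (1 : Fin (m + 3)).succAbove (0 : Fin (m + 3)).succAbove) i j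
          = s (l + (if i.1 = 0 then 0 else (i.1 : ℤ) + 1) + (j.1 : ℤ)) := by
      intro i j
      simp only [Matrix.submatrix_apply, hA, Matrix.of_apply, Fin.zero_succAbove]
      congr 1
      simp only [val_succAbove_one, Fin.val_succ]
      split_ifs <;> push_cast <;> ring
    rw [det_eq_gamma s l (by omega) _ hent]
    simp only [Fin.val_one, Fin.val_zero]
    ring
  rw [ca, cb, cc, cd, ce, cf] at key2
  rcases Nat.even_or_odd m with hm | hm
  · rw [hm.neg_one_pow] at key2
    linear_combination -key2
  · rw [hm.neg_one_pow] at key2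
    linear_combination key2

lemma id1_main (s : ℤ → ℝ) (l : ℤ) (m : ℕ) :
    hankelDet s (l - 1) (m + 2) * hankelDet s (l + 2) (m + 1) =
      hankelDet s (l + 1) (m + 1) * gammaDet s (l - 1) (m + 2) -
        hankelDet s l (m + 2) * gammaDet s l (m + 1) := by
  set F : Matrix (Fin (m + 3)) (Fin (m + 3)) ℝ :=
    Matrix.of (fun i j : Fin (m + 3) => s (l - 2 + (i.1 : ℤ) + (j.1 : ℤ))) with hF
  have hone0 : ((1 : Fin (m + 3)).succAbove (0 : Fin (m + 2))) = (0 : Fin (m + 3)) := by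
    ext
    rw [val_succAbove_one]
    simp
  have honelast : ((1 : Fin (m + 3)).succAbove (Fin.last (m + 1))) = Fin.last (m + 2) := by
    ext
    rw [val_succAbove_one]
    simp [Fin.val_last]
  have hzerolast : ((0 : Fin (m + 3)).succAbove (Fin.last (m + 1))) = Fin.last (m + 2) := by
    ext
    simp [Fin.zero_succAbove, Fin.val_succ, Fin.val_last]
  have key1 := key_real (F.updateCol 0 (Pi.single (Fin.last (m + 2)) 1)) 0 1 0 1
    (by exact fun h => absurd h Fin.zero_ne_one)
  simp only [updateColumn_overwrite] at key1
  have c0 : (F.updateCol 0 (Pi.single (Fin.last (m + 2)) 1)).det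
      = (-1 : ℝ) ^ m * hankelDet s (l - 1) (m + 2) := by
    rw [det_updateColumn_single]
    have hent : ∀ i j : Fin (m + 2),
        (F.submatrix (Fin.last (m + 2)).succAbove (0 : Fin (m + 3)).succAbove) i j
          = s ((l - 1) + (i.1 : ℤ) + (j.1 : ℤ)) := by
      intro i j
      simp only [Matrix.submatrix_apply, hF, Matrix.of_apply, Fin.succAbove_last,
        Fin.zero_succAbove]
      congr 1
      simp only [Fin.coe_castSucc, Fin.val_succ]
      push_cast
      ring
    rw [det_eq_hankel s (l - 1) _ hent]
    simp only [Fin.val_last, Fin.val_zero]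
    ring
  have c1 : ((F.updateCol 0 (Pi.single 0 1)).updateCol 1 (Pi.single 1 1)).det
      = hankelDet s (l + 2) (m + 1) := by
    have e := det_updateColumn_single_two F 1 1 0 0
    rw [hone0] at e
    rw [e]
    have hent : ∀ i j : Fin (m + 1),
        (F.submatrix ((1 : Fin (m + 3)).succAbove ∘ (0 : Fin (m + 2)).succAbove)
          ((1 : Fin (m + 3)).succAbove ∘ (0 : Fin (m + 2)).succAbove)) i j
          = s ((l + 2) + (i.1 : ℤ) + (j.1 : ℤ)) := by
      intro i j
      simp only [Matrix.submatrix_apply, Function.comp_apply, hF, Matrix.of_apply,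
        Fin.zero_succAbove]
      congr 1
      simp only [val_succAbove_one, Fin.val_succ]
      simp only [Nat.succ_ne_zero, if_false]
      push_cast
      ring
    rw [det_eq_hankel s (l + 2) _ hent]
    simp only [Fin.val_zero, Fin.val_one]
    ring
  have c2 : (F.updateCol 0 (Pi.single 0 1)).det = hankelDet s l (m + 2) := by
    rw [det_updateColumn_single]
    have hent : ∀ i j : Fin (m + 2),
        (F.submatrix (0 : Fin (m + 3)).succAbove (0 : Fin (m + 3)).succAbove) i j
          = s (l + (i.1 : ℤ) + (j.1 : ℤ)) := by
      intro i j
      simp only [Matrix.submatrix_apply, hF, Matrix.of_apply, Fin.zero_succAbove]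
      congr 1
      simp only [Fin.val_succ]
      push_cast
      ring
    rw [det_eq_hankel s l _ hent]
    simp only [Fin.val_zero]
    ring
  have c3 : ((F.updateCol 0 (Pi.single (Fin.last (m + 2)) 1)).updateCol 1
      (Pi.single 1 1)).det = -((-1 : ℝ) ^ m) * gammaDet s l (m + 1) := by
    have e := det_updateColumn_single_two F 1 1 (Fin.last (m + 1)) 0
    rw [hone0, honelast] at e
    rw [e]
    have hent : ∀ i j : Fin (m + 1),
        (F.submatrix ((1 : Fin (m + 3)).succAbove ∘ (Fin.last (m + 1)).succAbove)
          ((1 : Fin (m + 3)).succAbove ∘ (0 : Fin (m + 2)).succAbove)) i j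
          = s (l + (if i.1 = 0 then 0 else (i.1 : ℤ) + 1) + (j.1 : ℤ)) := by
      intro i j
      simp only [Matrix.submatrix_apply, Function.comp_apply, hF, Matrix.of_apply,
        Fin.zero_succAbove, Fin.succAbove_last]
      congr 1
      simp only [val_succAbove_one, Fin.coe_castSucc, Fin.val_succ]
      simp only [Nat.succ_ne_zero, if_false]
      split_ifs <;> push_cast <;> ring
    rw [det_eq_gamma s l (by omega) _ hent]
    simp only [Fin.val_zero, Fin.val_one, Fin.val_last]
    ring
  have c4 : ((F.updateCol 0 (Pi.single (Fin.last (m + 2)) 1)).updateCol 1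
      (Pi.single 0 1)).det = (-1 : ℝ) ^ m * hankelDet s (l + 1) (m + 1) := by
    have e := det_updateColumn_single_two F 0 1 (Fin.last (m + 1)) 0
    rw [hone0, hzerolast] at e
    rw [e]
    have hent : ∀ i j : Fin (m + 1),
        (F.submatrix ((0 : Fin (m + 3)).succAbove ∘ (Fin.last (m + 1)).succAbove)
          ((1 : Fin (m + 3)).succAbove ∘ (0 : Fin (m + 2)).succAbove)) i j
          = s ((l + 1) + (i.1 : ℤ) + (j.1 : ℤ)) := by
      intro i j
      simp only [Matrix.submatrix_apply, Function.comp_apply, hF, Matrix.of_apply,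
        Fin.zero_succAbove, Fin.succAbove_last]
      congr 1
      simp only [val_succAbove_one, Fin.coe_castSucc, Fin.val_succ]
      simp only [Nat.succ_ne_zero, if_false]
      push_cast
      ring
    rw [det_eq_hankel s (l + 1) _ hent]
    simp only [Fin.val_zero, Fin.val_one, Fin.val_last]
    ring
  have c5 : (F.updateCol 0 (Pi.single 1 1)).det = -gammaDet s (l - 1) (m + 2) := by
    rw [det_updateColumn_single]
    have hent : ∀ i j : Fin (m + 2),
        (F.submatrix (1 : Fin (m + 3)).succAbove (0 : Fin (m + 3)).succAbove) i j
          = s ((l - 1) + (if i.1 = 0 then 0 else (i.1 : ℤ) + 1) + (j.1 : ℤ)) := by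
      intro i j
      simp only [Matrix.submatrix_apply, hF, Matrix.of_apply, Fin.zero_succAbove]
      congr 1
      simp only [val_succAbove_one, Fin.val_succ]
      split_ifs <;> push_cast <;> ring
    rw [det_eq_gamma s (l - 1) (by omega) _ hent]
    simp only [Fin.val_one, Fin.val_zero]
    ring
  rw [c0, c1, c2, c3, c4, c5] at key1
  rcases Nat.even_or_odd m with hm | hm
  · rw [hm.neg_one_pow] at key1
    linear_combination key1
  · rw [hm.neg_one_pow] at key1
    linear_combination -key1

theorem stmt4 (s : ℤ → ℝ) (l : ℤ) (k : ℕ) (hk : 1 ≤ k) :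
    (hankelDet s (l - 1) k * hankelDet s (l + 2) (k - 1) =
      hankelDet s (l + 1) (k - 1) * gammaDet s (l - 1) k -
        hankelDet s l k * gammaDet s l (k - 1)) ∧
    (hankelDet s (l - 1) (k + 1) * hankelDet s (l + 2) (k - 1) =
      hankelDet s (l + 1) k * gammaDet s (l - 1) k -
        hankelDet s l k * gammaDet s l k) := by
  match k, hk with
  | 1, _ =>
    have h0 : ∀ a : ℤ, hankelDet s a 0 = 1 := fun a => Matrix.det_fin_zero
    have g0 : ∀ a : ℤ, gammaDet s a 0 = 0 := fun a => by simp [gammaDet]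
    have h1 : ∀ a : ℤ, hankelDet s a 1 = s a := fun a => by
      simp [hankelDet, Matrix.det_fin_one]
    have g1 : ∀ a : ℤ, gammaDet s a 1 = s a := fun a => by
      simp [gammaDet, Matrix.det_fin_one]
    have h2 : hankelDet s (l - 1) 2 = s (l - 1) * s (l + 1) - s l * s l := by
      simp [hankelDet, Matrix.det_fin_two]
      try ring_nf
    constructor
    · show hankelDet s (l - 1) 1 * hankelDet s (l + 2) 0 =
        hankelDet s (l + 1) 0 * gammaDet s (l - 1) 1 - hankelDet s l 1 * gammaDet s l 0
      rw [h1, h0, h0, g1, h1, g0]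
      ring
    · show hankelDet s (l - 1) 2 * hankelDet s (l + 2) 0 =
        hankelDet s (l + 1) 1 * gammaDet s (l - 1) 1 - hankelDet s l 1 * gammaDet s l 1
      rw [h2, h0, h1, g1, h1, g1]
      ring
  | (m + 2), _ =>
    exact ⟨id1_main s l m, id2_main s l m⟩
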